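/- Fix q with 1 < q < 2 and a relaxation interval ε = [ε₋, ε₊] with 0 < ε₋ ≤ ε₊ < ∞. For every t ≥ 0, the function a ↦ (1/2)a^{q-2}t² + (1/q - 1/2)a^q attains its minimum over the interval [ε₋, ε₊] at the unique point a = clamp_ε(t) = max(ε₋, min(t, ε₊)), and the minimal value equals κ*_ε(t). -/

import Mathlib

open Real


lemma fDeriv (q t : ℝ) (hq : q ≠ 0) {a : ℝ} (ha : 0 < a) :
    HasDerivAt (fun a : ℝ => (1/2) * a ^ (q-2) * t^2 + (1/q - 1/2) * a ^ q)
      ((2-q)/2 * a^(q-3) * (a^2 - t^2)) a := by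
  have h1 := ((Real.hasDerivAt_rpow_const (p := q-2) (Or.inl ha.ne')).const_mul
    (1/2 : ℝ)).mul_const (t^2)
  have h2 := (Real.hasDerivAt_rpow_const (p := q) (Or.inl ha.ne')).const_mul (1/q - 1/2)
  convert h1.add h2 using 1
  case e'_4 => rfl
  case e'_5 => rfl
  case e'_8 => rfl
  have e1 : a ^ (q-3) * a^2 = a ^ (q-1) := by
    rw [← Real.rpow_natCast a 2, ← Real.rpow_add ha]
    norm_num
    congr 1
    ring
  have e2 : a ^ (q - 2 - 1) = a ^ (q - 3) := by ring_nf
  rw [e2, ← e1]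
  field_simp
  ring

lemma fMono (q t : ℝ) (hq1 : 1 < q) (hq2 : q < 2) {l u : ℝ} (hl : 0 < l) (ht : 0 ≤ t)
    (htl : t ≤ l) :
    StrictMonoOn (fun a : ℝ => (1/2) * a ^ (q-2) * t^2 + (1/q - 1/2) * a ^ q)
      (Set.Icc l u) := by
  have hq : q ≠ 0 := by linarith
  apply strictMonoOn_of_deriv_pos (convex_Icc l u)
  · exact fun x hx => ((fDeriv q t hq (lt_of_lt_of_le hl hx.1)).continuousAt).continuousWithinAt
  · intro x hx
    rw [interior_Icc] at hx
    have hx0 : 0 < x := lt_trans hl hx.1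
    rw [(fDeriv q t hq hx0).deriv]
    have h1 : t^2 < x^2 := by nlinarith [hx.1]
    have h2 : (0:ℝ) < x ^ (q-3) := Real.rpow_pos_of_pos hx0 _
    have h3 : (0:ℝ) < (2-q)/2 := by linarith
    exact mul_pos (mul_pos h3 h2) (by linarith)

lemma fAnti (q t : ℝ) (hq1 : 1 < q) (hq2 : q < 2) {l u : ℝ} (hl : 0 < l) (hut : u ≤ t) :
    StrictAntiOn (fun a : ℝ => (1/2) * a ^ (q-2) * t^2 + (1/q - 1/2) * a ^ q)
      (Set.Icc l u) := by
  have hq : q ≠ 0 := by linarith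
  apply strictAntiOn_of_deriv_neg (convex_Icc l u)
  · exact fun x hx => ((fDeriv q t hq (lt_of_lt_of_le hl hx.1)).continuousAt).continuousWithinAt
  · intro x hx
    rw [interior_Icc] at hx
    have hx0 : 0 < x := lt_trans hl hx.1
    rw [(fDeriv q t hq hx0).deriv]
    have h1 : x^2 < t^2 := by nlinarith [hx.2, lt_of_lt_of_le hx.2 hut]
    have h2 : (0:ℝ) < x ^ (q-3) := Real.rpow_pos_of_pos hx0 _
    have h3 : (0:ℝ) < (2-q)/2 := by linarith
    exact mul_neg_of_pos_of_neg (mul_pos h3 h2) (by linarith)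

/-- The relaxed integrand `κ*_ε`. -/
noncomputable def kappaStar (q em ep t : ℝ) : ℝ :=
  if t ≤ em then (1/2) * em ^ (q-2) * t^2 + (1/q - 1/2) * em ^ q
  else if t ≤ ep then (1/q) * t ^ q
  else (1/2) * ep ^ (q-2) * t^2 + (1/q - 1/2) * ep ^ q

/-- For `1 < q < 2`, `0 < ε₋ ≤ ε₊ < ∞` and `t ≥ 0`, the function
`a ↦ (1/2) a^(q-2) t² + (1/q - 1/2) a^q` attains its minimum over `[ε₋, ε₊]` at the unique
point `a = clamp_ε(t) = max(ε₋, min(t, ε₊))`, and the minimal value equals `κ*_ε(t)`. -/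
theorem stmt1 (q em ep : ℝ) (hq1 : 1 < q) (hq2 : q < 2) (hem : 0 < em) (hemep : em ≤ ep)
    (t : ℝ) (ht : 0 ≤ t) :
    (∀ a ∈ Set.Icc em ep,
      (1/2) * (max em (min t ep)) ^ (q-2) * t^2 + (1/q - 1/2) * (max em (min t ep)) ^ q
        ≤ (1/2) * a ^ (q-2) * t^2 + (1/q - 1/2) * a ^ q) ∧
    (∀ a ∈ Set.Icc em ep,
      (1/2) * a ^ (q-2) * t^2 + (1/q - 1/2) * a ^ q
        = (1/2) * (max em (min t ep)) ^ (q-2) * t^2 + (1/q - 1/2) * (max em (min t ep)) ^ q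
      → a = max em (min t ep)) ∧
    (1/2) * (max em (min t ep)) ^ (q-2) * t^2 + (1/q - 1/2) * (max em (min t ep)) ^ q
      = kappaStar q em ep t := by
  set f : ℝ → ℝ := fun a => (1/2) * a ^ (q-2) * t^2 + (1/q - 1/2) * a ^ q with hf
  set c : ℝ := max em (min t ep) with hc
  have key : ∀ a ∈ Set.Icc em ep, a ≠ c → f c < f a := by
    intro a ha hne
    rcases le_or_gt t em with h1 | h1
    · have hce : c = em := by
        rw [hc, min_eq_left (le_trans h1 hemep), max_eq_left h1]
      rw [hce] at hne ⊢
      exact fMono q t hq1 hq2 hem ht h1 ⟨le_refl em, hemep⟩ ha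
        (lt_of_le_of_ne ha.1 (Ne.symm hne))
    · rcases le_or_gt t ep with h2 | h2
      · have hce : c = t := by rw [hc, min_eq_left h2, max_eq_right h1.le]
        rw [hce] at hne ⊢
        rcases lt_or_gt_of_ne hne with hlt | hgt
        · exact fAnti q t hq1 hq2 hem (le_refl t) (Set.mem_Icc.2 ⟨ha.1, hlt.le⟩)
            (Set.mem_Icc.2 ⟨h1.le, le_refl t⟩) hlt
        · exact fMono q t hq1 hq2 (lt_trans hem h1) ht (le_refl t)
            (Set.mem_Icc.2 ⟨le_refl t, h2⟩) (Set.mem_Icc.2 ⟨hgt.le, ha.2⟩) hgt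
      · have hce : c = ep := by
          rw [hc, min_eq_right h2.le, max_eq_right hemep]
        rw [hce] at hne ⊢
        exact fAnti q t hq1 hq2 hem h2.le ha ⟨hemep, le_refl ep⟩
          (lt_of_le_of_ne ha.2 hne)
  refine ⟨?_, ?_, ?_⟩
  · intro a ha
    by_cases h : a = c
    · rw [h]
    · exact (key a ha h).le
  · intro a ha heq
    by_contra h
    have := key a ha h
    change f a = f c at heq
    linarith
  · unfold kappaStar
    rcases le_or_gt t em with h1 | h1
    · have hce : c = em := by
        rw [hc, min_eq_left (le_trans h1 hemep), max_eq_left h1]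
      rw [hce, if_pos h1]
    · rcases le_or_gt t ep with h2 | h2
      · have hce : c = t := by rw [hc, min_eq_left h2, max_eq_right h1.le]
        rw [hce, if_neg (not_le.2 h1), if_pos h2]
        have ht0 : 0 < t := lt_trans hem h1
        have e1 : t ^ (q-2) * t^2 = t ^ q := by
          rw [← Real.rpow_natCast t 2, ← Real.rpow_add ht0]
          norm_num
        rw [mul_assoc, e1]
        ring
      · have hce : c = ep := by rw [hc, min_eq_right h2.le, max_eq_right hemep]
        rw [hce, if_neg (not_le.2 (lt_of_le_of_lt hemep h2)), if_neg (not_le.2 h2)]
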